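/- Let I be a finite set, p(t) : ℝ → ℝ^I a continuous catty-corner curve (strictly increasing in each coordinate with limits ±∞ at ±∞), and fix m ∈ ℕ^I. Then the set of t ∈ ℝ for which there exist n ∈ ℕ^I with 0 < n ≤ m (componentwise) and d ∈ ℤ such that p(t)·n = d is a discrete subset of ℝ (in particular, it intersects every bounded interval in a finite set). -/

import Mathlib

/-- For a continuous catty-corner curve `p : ℝ → ℝ^I` and a fixed
`m ∈ ℕ^I`, the set of `t ∈ ℝ` such that `p(t)·n ∈ ℤ` for some `0 < n ≤ m` is
discrete; in particular its intersection with any bounded interval is finite. -/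
theorem stmt4 {I : Type*} [Fintype I] (p : ℝ → I → ℝ)
    (hcont : ∀ i, Continuous fun t => p t i)
    (hmono : ∀ i, StrictMono fun t => p t i)
    (htop : ∀ i, Filter.Tendsto (fun t => p t i) Filter.atTop Filter.atTop)
    (hbot : ∀ i, Filter.Tendsto (fun t => p t i) Filter.atBot Filter.atBot)
    (m : I → ℕ) :
    ∀ a b : ℝ,
      ({t : ℝ | ∃ (n : I → ℕ) (d : ℤ), n ≠ 0 ∧ n ≤ m ∧ ∑ i, p t i * (n i : ℝ) = (d : ℝ)}
        ∩ Set.Icc a b).Finite := by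
  classical
  intro a b
  -- For each fixed nonzero n, the per-n set is finite
  have key : ∀ n : I → ℕ, n ≠ 0 →
      ({t : ℝ | ∃ d : ℤ, ∑ i, p t i * (n i : ℝ) = (d : ℝ)} ∩ Set.Icc a b).Finite := by
    intro n hn
    set f : ℝ → ℝ := fun t => ∑ i, p t i * (n i : ℝ) with hf
    have hfs : StrictMono f := by
      intro s t hst
      obtain ⟨i₀, hi₀⟩ : ∃ i, n i ≠ 0 := by
        by_contra h
        push_neg at h
        exact hn (funext fun i => h i)
      refine Finset.sum_lt_sum (fun i _ =>
          mul_le_mul_of_nonneg_right (le_of_lt (hmono i hst)) (Nat.cast_nonneg _))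
        ⟨i₀, Finset.mem_univ _, mul_lt_mul_of_pos_right (hmono i₀ hst)
          (by exact_mod_cast Nat.pos_of_ne_zero hi₀)⟩
    apply Set.Finite.of_finite_image (f := fun t => ⌊f t⌋)
    · apply Set.Finite.subset (Set.finite_Icc ⌈f a⌉ ⌊f b⌋)
      rintro d ⟨t, ⟨⟨e, he⟩, hta, htb⟩, rfl⟩
      have h1 : f a ≤ f t := hfs.monotone hta
      have h2 : f t ≤ f b := hfs.monotone htb
      have hfe : f t = (e : ℝ) := he
      have hft : ⌊f t⌋ = e := by rw [hfe]; exact Int.floor_intCast e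
      simp only [hft]
      constructor
      · exact Int.ceil_le.mpr (hfe ▸ h1)
      · exact Int.le_floor.mpr (hfe ▸ h2)
    · rintro s ⟨⟨d, hd⟩, _⟩ t ⟨⟨e, he⟩, _⟩ hst
      apply hfs.injective
      have hd' : f s = (d : ℝ) := hd
      have he' : f t = (e : ℝ) := he
      simp only [hd', he', Int.floor_intCast] at hst
      rw [hd', he', hst]
  -- index over the finite set of n's
  have hS : ({n : I → ℕ | n ≠ 0 ∧ n ≤ m}).Finite :=
    (Set.finite_Icc 0 m).subset (fun n hn => ⟨zero_le, hn.2⟩)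
  have : ({t : ℝ | ∃ (n : I → ℕ) (d : ℤ), n ≠ 0 ∧ n ≤ m ∧ ∑ i, p t i * (n i : ℝ) = (d : ℝ)}
        ∩ Set.Icc a b) ⊆
      ⋃ n ∈ {n : I → ℕ | n ≠ 0 ∧ n ≤ m},
        ({t : ℝ | ∃ d : ℤ, ∑ i, p t i * (n i : ℝ) = (d : ℝ)} ∩ Set.Icc a b) := by
    rintro t ⟨⟨n, d, hn0, hnm, hsum⟩, htab⟩
    exact Set.mem_biUnion ⟨hn0, hnm⟩ ⟨⟨d, hsum⟩, htab⟩
  exact Set.Finite.subset (Set.Finite.biUnion hS fun n hn => key n hn.1) this
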